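/- (Sensitivity to a unit parameter increase) Let f : 2^E → ℕ be an integral polymatroid rank function, let every C_e : ℕ×ℕ → ℝ≥0 be regular, let t ∈ ℕ^E, d ∈ ℕ, and let x be optimal for P(t,d). Fix e* ∈ E and set t' = t + χ_{e*}. If D_{e*}(x) = ∅ then x is optimal for P(t',d). Otherwise let g* ∈ D_{e*}(x) minimize C_g⁺(x_g;t_g) over g ∈ D_{e*}(x) and set y = x − χ_{e*} + χ_{g*}; then whichever of x and y has the smaller value of Σ_{e∈E} C_e(·_e;t'_e) is an optimal solution of P(t',d). -/

import Mathlib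

open Finset

/-- Indicator vector of an element. -/
def chi {E : Type*} [DecidableEq E] (e : E) : E → ℕ := fun e' => if e' = e then 1 else 0

/-- Integral polymatroid rank function: normalized, monotone, submodular. -/
def IsPolymatroidRank {E : Type*} [Fintype E] [DecidableEq E] (f : Finset E → ℕ) : Prop :=
  f ∅ = 0 ∧ (∀ U V : Finset E, U ⊆ V → f U ≤ f V) ∧
    (∀ U V : Finset E, f (U ∪ V) + f (U ∩ V) ≤ f U + f V)

/-- The integral polymatroid base polytope `B_f(d)`. -/
def Base {E : Type*} [Fintype E] (f : Finset E → ℕ) (d : ℕ) : Set (E → ℕ) :=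
  {x | (∀ U : Finset E, ∑ e ∈ U, x e ≤ f U) ∧ ∑ e, x e = d}

/-- Regularity of a parametrized cost function: the left discrete derivative
`C⁻(x;t) = C(x;t) - C(x-1;t)` (for `x ≥ 1`) satisfies both
`C⁻(x;t) ≤ C⁻(x;t+1)` and `C⁻(x;t+1) ≤ C⁻(x+1;t)`. -/
def Regular (C : ℕ → ℕ → ℝ) : Prop :=
  ∀ x t : ℕ, 1 ≤ x →
    C x t - C (x - 1) t ≤ C x (t + 1) - C (x - 1) (t + 1) ∧
    C x (t + 1) - C (x - 1) (t + 1) ≤ C (x + 1) t - C x t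

/-- The objective `Σ_{e ∈ E} C_e(x_e; t_e)` of problem `P(t,d)`. -/
def totalCost {E : Type*} [Fintype E] (C : E → ℕ → ℕ → ℝ) (t : E → ℕ) (x : E → ℕ) : ℝ :=
  ∑ e, C e (x e) (t e)

/-- An optimal solution of `P(t,d)`: minimize `Σ_e C_e(x_e;t_e)` over `B_f(d)`. -/
def IsOptimal {E : Type*} [Fintype E] (f : Finset E → ℕ) (C : E → ℕ → ℕ → ℝ)
    (t : E → ℕ) (d : ℕ) (x : E → ℕ) : Prop :=
  x ∈ Base f d ∧ ∀ y ∈ Base f d, totalCost C t x ≤ totalCost C t y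

/-- The `L1`-distance `‖u - v‖ = Σ_e |u_e - v_e|` of two vectors in `ℕ^E`. -/
def l1 {E : Type*} [Fintype E] (u v : E → ℕ) : ℕ :=
  ∑ e, ((u e : ℤ) - (v e : ℤ)).natAbs

set_option linter.unusedSectionVars false
set_option linter.unusedVariables false

section Aux
variable {E : Type*} [Fintype E] [DecidableEq E]

/-- The exchange move: decrease at `e`, increase at `g`. -/
def exch (x : E → ℕ) (e g : E) : E → ℕ :=
  fun a => if a = e then x e - 1 else if a = g then x g + 1 else x a

lemma exch_apply_e (x : E → ℕ) (e g : E) : exch x e g e = x e - 1 := by simp [exch]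

lemma exch_apply_g (x : E → ℕ) {e g : E} (h : g ≠ e) : exch x e g g = x g + 1 := by
  simp [exch, h]

lemma exch_apply_other (x : E → ℕ) {e g a : E} (h1 : a ≠ e) (h2 : a ≠ g) :
    exch x e g a = x a := by simp [exch, h1, h2]

lemma exch_eq_add_sub (x : E → ℕ) {e g : E} (h : g ≠ e) :
    x + chi g - chi e = exch x e g := by
  funext a
  simp only [Pi.sub_apply, Pi.add_apply, chi, exch]
  by_cases h1 : a = e
  · subst h1
    simp [h.symm, fun hh : a = g => h hh.symm]
  · by_cases h2 : a = g <;> simp [h1, h2, h]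

lemma exch_eq_sub_add (x : E → ℕ) {e g : E} (h : g ≠ e) :
    x - chi e + chi g = exch x e g := by
  funext a
  simp only [Pi.sub_apply, Pi.add_apply, chi, exch]
  by_cases h1 : a = e
  · subst h1
    simp [h.symm]
  · by_cases h2 : a = g <;> simp [h1, h2, h]

lemma sum_exch_add (x : E → ℕ) {e g : E} (h : g ≠ e) (hx : 1 ≤ x e) (U : Finset E) :
    (∑ a ∈ U, exch x e g a) + (if e ∈ U then 1 else 0)
      = (∑ a ∈ U, x a) + (if g ∈ U then 1 else 0) := by
  have hpt : ∀ a, exch x e g a + (if a = e then 1 else 0)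
      = x a + (if a = g then 1 else 0) := by
    intro a
    by_cases h1 : a = e
    · subst h1; simp [exch, h.symm]; omega
    · by_cases h2 : a = g <;> simp [exch, h1, h2, h]
  calc (∑ a ∈ U, exch x e g a) + (if e ∈ U then 1 else 0)
      = ∑ a ∈ U, (exch x e g a + (if a = e then 1 else 0)) := by
        rw [Finset.sum_add_distrib, Finset.sum_ite_eq' U e (fun _ => 1)]
    _ = ∑ a ∈ U, (x a + (if a = g then 1 else 0)) := by
        exact Finset.sum_congr rfl fun a _ => hpt a
    _ = (∑ a ∈ U, x a) + (if g ∈ U then 1 else 0) := by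
        rw [Finset.sum_add_distrib, Finset.sum_ite_eq' U g (fun _ => 1)]

lemma exch_mem_base {f : Finset E → ℕ} {d : ℕ} {x : E → ℕ} (hx : x ∈ Base f d)
    {e g : E} (h : g ≠ e) (hxe : 1 ≤ x e)
    (hfeas : ∀ U : Finset E, g ∈ U → e ∉ U → (∑ a ∈ U, x a) + 1 ≤ f U) :
    exch x e g ∈ Base f d := by
  obtain ⟨hx1, hx2⟩ := hx
  constructor
  · intro U
    have hs := sum_exch_add x h hxe U
    have hU := hx1 U
    by_cases he : e ∈ U <;> by_cases hg : g ∈ U <;> simp [he, hg] at hs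
    · omega
    · omega
    · have := hfeas U hg he; omega
    · omega
  · have hs := sum_exch_add x h hxe univ
    simp only [mem_univ, if_pos] at hs
    omega
end Aux

section Exchange
variable {E : Type*} [Fintype E] [DecidableEq E]

lemma tight_union_inter {f : Finset E → ℕ}
    (hsub : ∀ U V : Finset E, f (U ∪ V) + f (U ∩ V) ≤ f U + f V)
    {x : E → ℕ} (hx : ∀ U : Finset E, ∑ a ∈ U, x a ≤ f U)
    {U V : Finset E} (hU : ∑ a ∈ U, x a = f U) (hV : ∑ a ∈ V, x a = f V) :
    (∑ a ∈ U ∪ V, x a = f (U ∪ V)) ∧ (∑ a ∈ U ∩ V, x a = f (U ∩ V)) := by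
  have h1 := hx (U ∪ V)
  have h2 := hx (U ∩ V)
  have h3 := hsub U V
  have h4 : (∑ a ∈ U ∪ V, x a) + ∑ a ∈ U ∩ V, x a = (∑ a ∈ U, x a) + ∑ a ∈ V, x a :=
    Finset.sum_union_inter
  omega

lemma mem_inf_finsets {G : Finset (Finset E)} {a : E} :
    a ∈ G.inf id ↔ ∀ U ∈ G, a ∈ U := by
  classical
  induction G using Finset.induction_on with
  | empty => simp [Finset.inf_empty]
  | insert b s hni ih => simp [Finset.inf_insert, ih]

lemma inf_closed {P : Finset E → Prop} (hP : ∀ U V, P U → P V → P (U ∩ V)) :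
    ∀ G : Finset (Finset E), G.Nonempty → (∀ U ∈ G, P U) → P (G.inf id) := by
  intro G hGne
  induction hGne using Finset.Nonempty.cons_induction with
  | singleton a => intro h; simpa using h a (by simp)
  | cons a s ha hs ih =>
    intro h
    rw [Finset.inf_cons]
    have h1 : P a := h a (by simp)
    have h2 : P (s.inf id) := ih fun U hU => h U (by simp [Finset.mem_cons, hU])
    simpa [Finset.inf_eq_inter] using hP _ _ h1 h2

lemma exchange {f : Finset E → ℕ} (hf : IsPolymatroidRank f) {d : ℕ} {x z : E → ℕ}
    (hx : x ∈ Base f d) (hz : z ∈ Base f d) {e : E} (hlt : z e < x e) :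
    ∃ g, g ≠ e ∧ x g < z g ∧ exch x e g ∈ Base f d ∧ exch z g e ∈ Base f d := by
  classical
  obtain ⟨hx1, hx2⟩ := hx
  obtain ⟨hz1, hz2⟩ := hz
  -- the union of all x-tight sets avoiding e
  set F : Finset (Finset E) :=
    univ.filter (fun U => (∑ b ∈ U, x b = f U) ∧ e ∉ U) with hF
  set A : Finset E := F.sup id with hAdef
  have hA_mem : ∀ a, a ∈ A ↔ ∃ U : Finset E, (∑ b ∈ U, x b = f U) ∧ e ∉ U ∧ a ∈ U := by
    intro a
    simp only [hAdef, Finset.mem_sup, hF, mem_filter, mem_univ, true_and, id]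
    constructor
    · rintro ⟨U, ⟨h1, h2⟩, h3⟩; exact ⟨U, h1, h2, h3⟩
    · rintro ⟨U, h1, h2, h3⟩; exact ⟨U, ⟨h1, h2⟩, h3⟩
  have hA_prop : (∑ b ∈ A, x b = f A) ∧ e ∉ A := by
    rw [hAdef]
    apply Finset.sup_induction (p := fun W => (∑ b ∈ W, x b = f W) ∧ e ∉ W)
    · constructor
      · simpa using hf.1.symm
      · exact notMem_empty e
    · intro U hU V hV
      simp only [Finset.sup_eq_union, mem_union]
      exact ⟨(tight_union_inter hf.2.2 hx1 hU.1 hV.1).1, by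
        rintro (h | h); exacts [hU.2 h, hV.2 h]⟩
    · intro U hU; simp only [hF, mem_filter] at hU; exact ⟨hU.2.1, hU.2.2⟩
  have hAe : e ∉ A := hA_prop.2
  have hAtight : ∑ b ∈ A, x b = f A := hA_prop.1
  -- the intersection of all z-tight sets containing e
  set G : Finset (Finset E) :=
    univ.filter (fun U => (∑ b ∈ U, z b = f U) ∧ e ∈ U) with hG
  set S : Finset E := G.inf id with hSdef
  have hS_mem : ∀ a, a ∈ S ↔ ∀ U ∈ G, a ∈ U := fun a => mem_inf_finsets
  have heS : e ∈ S := by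
    rw [hS_mem]; intro U hU; simp only [hG, mem_filter] at hU; exact hU.2.2
  -- main combinatorial claim
  have hmain : ∃ g, g ≠ e ∧ x g < z g ∧ g ∉ A ∧ g ∈ S := by
    by_contra hcon
    push_neg at hcon
    -- every element of S \ A other than e has z ≤ x
    have hdom : ∀ g ∈ (S \ A).erase e, z g ≤ x g := by
      intro g hg
      obtain ⟨hgne, hgSA⟩ := Finset.mem_erase.mp hg
      obtain ⟨hgS, hgA⟩ := Finset.mem_sdiff.mp hgSA
      by_contra hzg
      exact hcon g hgne (by omega) hgA hgS
    have heSA : e ∈ S \ A := Finset.mem_sdiff.mpr ⟨heS, hAe⟩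
    have hWlt : ∑ b ∈ S \ A, z b < ∑ b ∈ S \ A, x b := by
      rw [← Finset.add_sum_erase _ z heSA, ← Finset.add_sum_erase _ x heSA]
      have := Finset.sum_le_sum hdom
      omega
    by_cases hGe : G = ∅
    · -- no z-tight set contains e : S = univ
      have hSuniv : S = univ := by rw [hSdef, hGe]; simp [Finset.inf_empty]
      have h1 : (∑ b ∈ univ ∩ A, z b) + ∑ b ∈ univ \ A, z b = ∑ b, z b :=
        Finset.sum_inter_add_sum_sdiff _ _ _
      have h2 : (∑ b ∈ univ ∩ A, x b) + ∑ b ∈ univ \ A, x b = ∑ b, x b :=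
        Finset.sum_inter_add_sum_sdiff _ _ _
      have h3 : univ ∩ A = A := by simp
      rw [h3] at h1 h2
      have h4 : ∑ b ∈ A, z b ≤ f A := hz1 A
      rw [hSuniv] at hWlt
      omega
    · -- S is z-tight
      have hGne : G.Nonempty := Finset.nonempty_iff_ne_empty.mpr hGe
      have hSprop : (∑ b ∈ S, z b = f S) ∧ e ∈ S := by
        rw [hSdef]
        apply inf_closed (P := fun U => (∑ b ∈ U, z b = f U) ∧ e ∈ U) ?_ G hGne
        · intro U hU; simp only [hG, mem_filter] at hU; exact hU.2
        · intro U V hU hV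
          exact ⟨(tight_union_inter hf.2.2 hz1 hU.1 hV.1).2, mem_inter.mpr ⟨hU.2, hV.2⟩⟩
      have hStight := hSprop.1
      -- the counting contradiction
      have h1 : (∑ b ∈ S ∩ A, z b) + ∑ b ∈ S \ A, z b = ∑ b ∈ S, z b :=
        Finset.sum_inter_add_sum_sdiff _ _ _
      have h2 : ∑ b ∈ S ∩ A, z b ≤ f (S ∩ A) := hz1 (S ∩ A)
      have h3 : f (S ∪ A) + f (S ∩ A) ≤ f S + f A := hf.2.2 S A
      have h4 : ∑ b ∈ S ∪ A, x b ≤ f (S ∪ A) := hx1 (S ∪ A)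
      have h5 : (∑ b ∈ A, x b) + ∑ b ∈ S \ A, x b = ∑ b ∈ S ∪ A, x b := by
        rw [← Finset.sum_union (Finset.disjoint_sdiff)]
        congr 1
        rw [Finset.union_comm S A, Finset.union_sdiff_self_eq_union]
      omega
  -- build the conclusion
  obtain ⟨g, hg_ne, hg_lt, hgA, hgS⟩ := hmain
  refine ⟨g, hg_ne, hg_lt, ?_, ?_⟩
  · apply exch_mem_base ⟨hx1, hx2⟩ hg_ne (by omega)
    intro U hgU heU
    have hne : ¬ (∑ b ∈ U, x b = f U) := by
      intro htight
      exact hgA ((hA_mem g).mpr ⟨U, htight, heU, hgU⟩)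
    have := hx1 U
    omega
  · apply exch_mem_base ⟨hz1, hz2⟩ (Ne.symm hg_ne) (by omega)
    intro U heU hgU
    have hne : ¬ (∑ b ∈ U, z b = f U) := by
      intro htight
      have hUG : U ∈ G := by simp only [hG, mem_filter]; exact ⟨mem_univ U, htight, heU⟩
      exact hgU ((hS_mem g).mp hgS U hUG)
    have := hz1 U
    omega
end Exchange

section Cost
variable {E : Type*} [Fintype E] [DecidableEq E]

lemma sum_split_one (estar : E) (F : E → ℝ) :
    ∑ a, F a = F estar + ∑ a ∈ univ.erase estar, F a :=
  (Finset.add_sum_erase _ _ (mem_univ estar)).symm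

lemma sum_split_two {e g : E} (h : g ≠ e) (F : E → ℝ) :
    ∑ a, F a = F e + (F g + ∑ a ∈ (univ.erase e).erase g, F a) := by
  rw [← Finset.add_sum_erase _ _ (mem_univ e),
    ← Finset.add_sum_erase _ _ (Finset.mem_erase.mpr ⟨h, mem_univ g⟩)]

lemma totalCost_exch (C : E → ℕ → ℕ → ℝ) (τ : E → ℕ) (w : E → ℕ) {e g : E} (h : g ≠ e) :
    totalCost C τ (exch w e g)
      = totalCost C τ w - C e (w e) (τ e) + C e (w e - 1) (τ e)
        + C g (w g + 1) (τ g) - C g (w g) (τ g) := by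
  unfold totalCost
  rw [sum_split_two h (fun a => C a (exch w e g a) (τ a)),
    sum_split_two h (fun a => C a (w a) (τ a))]
  have h2 : ∑ a ∈ (univ.erase e).erase g, C a (exch w e g a) (τ a)
      = ∑ a ∈ (univ.erase e).erase g, C a (w a) (τ a) := by
    refine Finset.sum_congr rfl fun a ha => ?_
    obtain ⟨hag, hae, _⟩ : a ≠ g ∧ a ≠ e ∧ True := by
      have h1 := Finset.mem_erase.mp ha
      have h2 := Finset.mem_erase.mp h1.2
      exact ⟨h1.1, h2.1, trivial⟩
    rw [exch_apply_other w hae hag]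
  rw [h2, exch_apply_e, exch_apply_g w h]
  ring

lemma totalCost_shift (C : E → ℕ → ℕ → ℝ) (t : E → ℕ) (estar : E) (w : E → ℕ) :
    totalCost C (t + chi estar) w
      = totalCost C t w
        + (C estar (w estar) (t estar + 1) - C estar (w estar) (t estar)) := by
  unfold totalCost
  rw [sum_split_one estar (fun a => C a (w a) ((t + chi estar) a)),
    sum_split_one estar (fun a => C a (w a) (t a))]
  have h2 : ∑ a ∈ univ.erase estar, C a (w a) ((t + chi estar) a)
      = ∑ a ∈ univ.erase estar, C a (w a) (t a) := by
    refine Finset.sum_congr rfl fun a ha => ?_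
    have hae := (Finset.mem_erase.mp ha).1
    simp [chi, Pi.add_apply, hae]
  have h3 : (t + chi estar) estar = t estar + 1 := by simp [chi, Pi.add_apply]
  rw [h2, h3]
  ring

lemma inc_mono {C : ℕ → ℕ → ℝ} (h : Regular C) (s : ℕ) :
    Monotone (fun n => C (n + 1) s - C n s) := by
  apply monotone_nat_of_le_succ
  intro n
  have h1 := h (n + 1) s (by omega)
  simp only [Nat.add_sub_cancel] at h1
  linarith [h1.1, h1.2]

lemma cross_le {C : ℕ → ℕ → ℝ} (h : Regular C) (s n : ℕ) :
    C (n + 1) (s + 1) - C n (s + 1) ≤ C (n + 2) s - C (n + 1) s := by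
  have h1 := (h (n + 1) s (by omega)).2
  simpa only [Nat.add_sub_cancel] using h1

lemma delta_mono {C : ℕ → ℕ → ℝ} (h : Regular C) (s : ℕ) :
    Monotone (fun n => C n (s + 1) - C n s) := by
  apply monotone_nat_of_le_succ
  intro n
  have h1 := (h (n + 1) s (by omega)).1
  simp only [Nat.add_sub_cancel] at h1
  linarith

/-- case of `z estar ≥ x estar`. -/
lemma case_ge {f : Finset E → ℕ} {C : E → ℕ → ℕ → ℝ} {t : E → ℕ} {d : ℕ} {x z : E → ℕ}
    (hreg : ∀ e, Regular (C e)) (hx : IsOptimal f C t d x) (hz : z ∈ Base f d)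
    {estar : E} (hle : x estar ≤ z estar) :
    totalCost C (t + chi estar) x ≤ totalCost C (t + chi estar) z := by
  have e1 := totalCost_shift C t estar x
  have e2 := totalCost_shift C t estar z
  have h3 := hx.2 z hz
  have h4 := delta_mono (hreg estar) (t estar) hle
  simp only at h4
  linarith

end Cost

section Key
variable {E : Type*} [Fintype E] [DecidableEq E]

lemma key_lemma {f : Finset E → ℕ} (hf : IsPolymatroidRank f)
    {C : E → ℕ → ℕ → ℝ} (hreg : ∀ e, Regular (C e))
    {t : E → ℕ} {d : ℕ} {x : E → ℕ} (hx : IsOptimal f C t d x)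
    {estar gstar : E} (hgne : gstar ≠ estar)
    (hmin : ∀ g, g ≠ estar → exch x estar g ∈ Base f d →
      C gstar (x gstar + 1) (t gstar) - C gstar (x gstar) (t gstar) ≤
        C g (x g + 1) (t g) - C g (x g) (t g)) :
    ∀ k (z : E → ℕ), z ∈ Base f d → x estar ≤ z estar + k →
      totalCost C (t + chi estar) x ≤ totalCost C (t + chi estar) z ∨
      totalCost C (t + chi estar) (exch x estar gstar) ≤ totalCost C (t + chi estar) z := by
  intro k
  induction k with
  | zero =>
    intro z hz hk
    exact Or.inl (case_ge hreg hx hz (by omega))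
  | succ k ih =>
    intro z hz hk
    by_cases hge : x estar ≤ z estar
    · exact Or.inl (case_ge hreg hx hz hge)
    push_neg at hge
    obtain ⟨g, hg_ne, hxg, hxE, hzE⟩ := exchange hf hx.1 hz hge
    have hxe1 : 1 ≤ x estar := by omega
    set z'' := exch z g estar with hz''def
    have hz''e : z'' estar = z estar + 1 := by
      simp [hz''def, exch, Ne.symm hg_ne]
    -- cost identity for z''
    have e4 : totalCost C t z'' = totalCost C t z - C g (z g) (t g) + C g (z g - 1) (t g)
        + C estar (z estar + 1) (t estar) - C estar (z estar) (t estar) := by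
      rw [hz''def]; exact totalCost_exch C t z (Ne.symm hg_ne)
    have e6 : C g (x g + 1) (t g) - C g (x g) (t g)
        ≤ C g (z g) (t g) - C g (z g - 1) (t g) := by
      have hmono := inc_mono (hreg g) (t g) (show x g ≤ z g - 1 by omega)
      simp only at hmono
      have hz1 : z g - 1 + 1 = z g := by omega
      rw [hz1] at hmono
      exact hmono
    by_cases hb : z estar + 1 = x estar
    · -- boundary case: compare with y directly
      right
      have e1 := totalCost_shift C t estar (exch x estar gstar)
      have hye : exch x estar gstar estar = x estar - 1 := exch_apply_e x estar gstar
      rw [hye] at e1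
      have e2 := totalCost_shift C t estar z
      have e3 := totalCost_exch C t x hgne
      have e5 : totalCost C t x ≤ totalCost C t z'' := hx.2 z'' hzE
      have e7 := hmin g hg_ne hxE
      have hzx : z estar = x estar - 1 := by omega
      rw [hzx] at e4 e2
      have hxx : x estar - 1 + 1 = x estar := by omega
      rw [hxx] at e4
      linarith
    · -- interior case: move to z'' and recurse
      have hstep : totalCost C (t + chi estar) z'' ≤ totalCost C (t + chi estar) z := by
        have e2 := totalCost_shift C t estar z
        have e2' := totalCost_shift C t estar z''
        rw [hz''e] at e2'
        have c1 := cross_le (hreg estar) (t estar) (z estar)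
        have c2 : C estar (z estar + 2) (t estar) - C estar (z estar + 1) (t estar)
            ≤ C estar (x estar) (t estar) - C estar (x estar - 1) (t estar) := by
          have hmono := inc_mono (hreg estar) (t estar)
            (show z estar + 1 ≤ x estar - 1 by omega)
          simp only at hmono
          have hxx : x estar - 1 + 1 = x estar := by omega
          have hzz : z estar + 1 + 1 = z estar + 2 := by omega
          rw [hxx, hzz] at hmono
          exact hmono
        have c3 : C estar (x estar) (t estar) - C estar (x estar - 1) (t estar)
            ≤ C g (x g + 1) (t g) - C g (x g) (t g) := by
          have e3' := totalCost_exch C t x hg_ne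
          have hopt := hx.2 _ hxE
          linarith
        linarith
      rcases ih z'' hzE (by rw [hz''e]; omega) with h | h
      · exact Or.inl (le_trans h hstep)
      · exact Or.inr (le_trans h hstep)
end Key

/-- **Sensitivity to a unit parameter increase.** Let `f` be an integral polymatroid rank
function, all `C_e` nonnegative and regular, `x` optimal for `P(t,d)`, `e* ∈ E`, and
`t' = t + χ_{e*}`. If `D_{e*}(x) = ∅` then `x` is optimal for `P(t',d)`. Otherwise, for any
`g* ∈ D_{e*}(x)` minimizing `C_g⁺(x_g;t_g)` over `D_{e*}(x)` and `y = x - χ_{e*} + χ_{g*}`,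
whichever of `x` and `y` has the smaller objective value w.r.t. `t'` is optimal for `P(t',d)`. -/
theorem sensitivity_unit_parameter_increase {E : Type*} [Fintype E] [DecidableEq E] [Nonempty E]
    (f : Finset E → ℕ) (hf : IsPolymatroidRank f)
    (C : E → ℕ → ℕ → ℝ) (hC0 : ∀ e x t, 0 ≤ C e x t)
    (hreg : ∀ e, Regular (C e))
    (t : E → ℕ) (d : ℕ) (x : E → ℕ)
    (hx : IsOptimal f C t d x)
    (estar : E) (t' : E → ℕ) (ht' : t' = t + chi estar) :
    (({g : E | g ≠ estar ∧ x + chi g - chi estar ∈ Base f d} = ∅) →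
        IsOptimal f C t' d x) ∧
    (∀ gstar ∈ {g : E | g ≠ estar ∧ x + chi g - chi estar ∈ Base f d},
      (∀ g ∈ {g : E | g ≠ estar ∧ x + chi g - chi estar ∈ Base f d},
          C gstar (x gstar + 1) (t gstar) - C gstar (x gstar) (t gstar) ≤
            C g (x g + 1) (t g) - C g (x g) (t g)) →
      (totalCost C t' x ≤ totalCost C t' (x - chi estar + chi gstar) →
          IsOptimal f C t' d x) ∧
      (totalCost C t' (x - chi estar + chi gstar) ≤ totalCost C t' x →
          IsOptimal f C t' d (x - chi estar + chi gstar))) := by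
  subst ht'
  constructor
  · -- D = ∅ : x stays optimal
    intro hempty
    refine ⟨hx.1, ?_⟩
    intro z hz
    have hge : x estar ≤ z estar := by
      by_contra hcon
      push_neg at hcon
      obtain ⟨g, hg_ne, _, hxE, _⟩ := exchange hf hx.1 hz hcon
      have hgmem : g ∈ {g : E | g ≠ estar ∧ x + chi g - chi estar ∈ Base f d} :=
        ⟨hg_ne, by rw [exch_eq_add_sub x hg_ne]; exact hxE⟩
      rw [hempty] at hgmem
      exact hgmem
    exact case_ge hreg hx hz hge
  · -- D ≠ ∅ : compare x and y
    intro gstar hgs hmin2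
    obtain ⟨hgne, hgB⟩ := hgs
    rw [exch_eq_add_sub x hgne] at hgB
    have hy_eq : x - chi estar + chi gstar = exch x estar gstar := exch_eq_sub_add x hgne
    have hmin : ∀ g, g ≠ estar → exch x estar g ∈ Base f d →
        C gstar (x gstar + 1) (t gstar) - C gstar (x gstar) (t gstar) ≤
          C g (x g + 1) (t g) - C g (x g) (t g) := by
      intro g hne hB
      exact hmin2 g ⟨hne, by rw [exch_eq_add_sub x hne]; exact hB⟩
    have hkey := key_lemma hf hreg hx hgne hmin
    rw [hy_eq]
    constructor
    · intro hle
      refine ⟨hx.1, ?_⟩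
      intro z hz
      rcases hkey (x estar) z hz (by omega) with h | h
      · exact h
      · exact le_trans hle h
    · intro hle
      refine ⟨hgB, ?_⟩
      intro z hz
      rcases hkey (x estar) z hz (by omega) with h | h
      · exact le_trans hle h
      · exact h
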